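/- Let G be a profinite-C group and A a nontrivial abelian closed normal subgroup of G. Then A contains a minimal closed normal subgroup of G, and such a subgroup has prime order. -/

import Mathlib

open Pointwise

/-- In a compact topological group, a subgroup having trivial intersection with an open
subgroup is finite. -/
private lemma finite_of_inf_open_bot {G : Type*} [Group G] [TopologicalSpace G]
    [IsTopologicalGroup G] [CompactSpace G] (H N : Subgroup G) (hN : IsOpen (N : Set G))
    (h : H ⊓ N = ⊥) : Finite H := by
  have : Finite (G ⧸ N) := N.quotient_finite_of_isOpen hN
  refine Finite.of_injective (fun x : H => (QuotientGroup.mk x.1 : G ⧸ N)) ?_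
  intro a b hab
  have hN' : (a.1)⁻¹ * b.1 ∈ N := (QuotientGroup.eq).mp hab
  have hmem : (a.1)⁻¹ * b.1 ∈ H ⊓ N := ⟨mul_mem (H.inv_mem a.2) b.2, hN'⟩
  rw [h, Subgroup.mem_bot] at hmem
  exact Subtype.ext (inv_mul_eq_one.mp hmem)

/-- A nontrivial abelian closed normal subgroup of a profinite-C group contains a
minimal closed normal subgroup of `G`, and such a subgroup has prime order. -/
theorem stmt12 {G : Type*} [Group G] [TopologicalSpace G] [IsTopologicalGroup G]
    [CompactSpace G] [T2Space G] [TotallyDisconnectedSpace G]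
    (hC : ∀ H : Subgroup G, IsClosed (H : Set G) → ∃ K : Subgroup G,
      IsClosed (K : Set G) ∧ (H : Set G) * (K : Set G) = Set.univ ∧ H ⊓ K = ⊥)
    (A : Subgroup G) [A.Normal] (hAc : IsClosed (A : Set G)) (hA : A ≠ ⊥)
    (hAab : ∀ x y : G, x ∈ A → y ∈ A → x * y = y * x) :
    ∃ B : Subgroup G, B ≤ A ∧ B ≠ ⊥ ∧ IsClosed (B : Set G) ∧ B.Normal ∧
      (∀ C : Subgroup G, C ≤ B → IsClosed (C : Set G) → C.Normal → C = ⊥ ∨ C = B) ∧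
      ∃ p : ℕ, p.Prime ∧ Nat.card B = p := by
  -- pick a nontrivial element of A
  obtain ⟨x, hxA, hx1⟩ := A.bot_or_exists_ne_one.resolve_left hA
  -- find an open subgroup N with x ∉ N
  have h1U : (1 : G) ∈ ({x}ᶜ : Set G) := by simpa using (Ne.symm hx1)
  obtain ⟨V, hVclopen, h1V, hVsub⟩ :=
    compact_exists_isClopen_in_isOpen isOpen_compl_singleton h1U
  obtain ⟨N, hNV⟩ := IsTopologicalGroup.exist_openSubgroup_sub_clopen_nhds_of_one hVclopen h1V
  have hxN : x ∉ N.toSubgroup := fun hx => (hVsub (hNV hx)) rfl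
  have hNclosed : IsClosed (N.toSubgroup : Set G) := N.isClosed
  set S : Set (Subgroup G) :=
    {D | IsClosed (D : Set G) ∧ D.Normal ∧ D ≤ A ∧ ¬ D ≤ N.toSubgroup} with hS
  have hAS : A ∈ S := ⟨hAc, inferInstance, le_rfl, fun h => hxN (h hxA)⟩
  -- Zorn's lemma gives a minimal element of S
  obtain ⟨B, hBS, hBmin⟩ : ∃ B ∈ S, ∀ z ∈ S, z ≤ B → B ≤ z := by
    set S' : Set (Set G) := {s | ∃ D ∈ S, (D : Set G) = s} with hS'
    have hbound : ∀ c ⊆ S', IsChain (· ⊆ ·) c → c.Nonempty →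
        ∃ lb ∈ S', ∀ s ∈ c, lb ⊆ s := by
      intro c hcS' hchain hcne
      set cG : Set (Subgroup G) := {D ∈ S | (D : Set G) ∈ c} with hcG
      have hcGne : cG.Nonempty := by
        obtain ⟨s, hs⟩ := hcne
        obtain ⟨D, hDS, hDs⟩ := hcS' hs
        exact ⟨D, hDS, by rw [hDs]; exact hs⟩
      have hccover : ∀ s ∈ c, ∃ D ∈ cG, (D : Set G) = s := by
        intro s hs
        obtain ⟨D, hDS, hDs⟩ := hcS' hs
        exact ⟨D, ⟨hDS, by rw [hDs]; exact hs⟩, hDs⟩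
      refine ⟨(sInf cG : Subgroup G), ⟨sInf cG, ⟨?_, ?_, ?_, ?_⟩, rfl⟩, ?_⟩
      · rw [Subgroup.coe_sInf]
        exact isClosed_biInter fun D hD => hD.1.1
      · exact ⟨fun n hn g => by
          rw [Subgroup.mem_sInf] at hn ⊢
          exact fun D hD => hD.1.2.1.conj_mem n (hn D hD) g⟩
      · obtain ⟨D, hD⟩ := hcGne
        exact le_trans (sInf_le hD) hD.1.2.2.1
      · -- compactness: the infimum still fails to lie in N
        have hne : Nonempty cG := hcGne.to_subtype
        have key : (⋂ D : cG, ((D.1 : Set G) ∩ (N.toSubgroup : Set G)ᶜ)).Nonempty := by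
          refine IsCompact.nonempty_iInter_of_directed_nonempty_isCompact_isClosed
            _ ?_ ?_ ?_ ?_
          · rintro ⟨D1, hD1⟩ ⟨D2, hD2⟩
            rcases hchain.total hD1.2 hD2.2 with h | h
            · exact ⟨⟨D1, hD1⟩, Set.Subset.rfl, Set.inter_subset_inter_left _ h⟩
            · exact ⟨⟨D2, hD2⟩, Set.inter_subset_inter_left _ h, Set.Subset.rfl⟩
          · rintro ⟨D, hD⟩
            obtain ⟨d, hd1, hd2⟩ := SetLike.not_le_iff_exists.mp hD.1.2.2.2
            exact ⟨d, hd1, hd2⟩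
          · rintro ⟨D, hD⟩
            exact (hD.1.1.inter (isClosed_compl_iff.mpr N.isOpen)).isCompact
          · rintro ⟨D, hD⟩
            exact hD.1.1.inter (isClosed_compl_iff.mpr N.isOpen)
        obtain ⟨g, hg⟩ := key
        intro hle
        obtain ⟨D0, hD0⟩ := hcGne
        have hgmem : g ∈ sInf cG := by
          rw [Subgroup.mem_sInf]
          exact fun D hD => (Set.mem_iInter.mp hg ⟨D, hD⟩).1
        exact (Set.mem_iInter.mp hg ⟨D0, hD0⟩).2 (hle hgmem)
      · intro s hs
        obtain ⟨D, hDcG, hDs⟩ := hccover s hs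
        rw [← hDs]
        exact_mod_cast sInf_le hDcG
    obtain ⟨m, -, hmS', hmmin⟩ := zorn_superset_nonempty S' hbound (A : Set G) ⟨A, hAS, rfl⟩
    obtain ⟨B, hBS, hBm⟩ := hmS'
    refine ⟨B, hBS, fun z hzS hzB => ?_⟩
    have := hmmin ⟨z, hzS, rfl⟩ (by rw [← hBm]; exact_mod_cast hzB)
    rw [← hBm] at this
    exact_mod_cast this
  obtain ⟨hBc, hBnorm, hBA, hBnotN⟩ := hBS
  have hBne : B ≠ ⊥ := fun h => hBnotN (h ▸ bot_le)
  -- Step 1: B ⊓ N = ⊥, using a complement of B ⊓ N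
  have hMbot : B ⊓ N.toSubgroup = ⊥ := by
    obtain ⟨K, hKc, hprod, hinf⟩ := hC (B ⊓ N.toSubgroup) (hBc.inter hNclosed)
    -- K ⊓ B is a closed normal subgroup of G contained in A but not in N
    have hdecomp : ∀ g : G, ∃ m ∈ B ⊓ N.toSubgroup, ∃ k ∈ K, m * k = g := by
      intro g
      have : g ∈ ((B ⊓ N.toSubgroup : Subgroup G) : Set G) * (K : Set G) := by
        rw [hprod]; trivial
      obtain ⟨m, hm, k, hk, hmk⟩ := this
      exact ⟨m, hm, k, hk, hmk⟩
    have hKBnormal : (K ⊓ B).Normal := by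
      constructor
      intro n hn g
      obtain ⟨m, hm, k, hk, rfl⟩ := hdecomp g
      have h1 : k * n * k⁻¹ ∈ K ⊓ B :=
        ⟨mul_mem (mul_mem hk hn.1) (K.inv_mem hk), hBnorm.conj_mem n hn.2 k⟩
      have hcomm : m * (k * n * k⁻¹) = (k * n * k⁻¹) * m :=
        hAab m (k * n * k⁻¹) (hBA hm.1) (hBA h1.2)
      have : m * k * n * (m * k)⁻¹ = k * n * k⁻¹ := by
        rw [mul_inv_rev]
        calc m * k * n * (k⁻¹ * m⁻¹) = m * (k * n * k⁻¹) * m⁻¹ := by group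
          _ = (k * n * k⁻¹) * m * m⁻¹ := by rw [hcomm]
          _ = k * n * k⁻¹ := by group
      rw [this]
      exact h1
    have hKBnotN : ¬ K ⊓ B ≤ N.toSubgroup := by
      intro hle
      apply hBnotN
      intro b hb
      obtain ⟨m, hm, k, hk, hmk⟩ := hdecomp b
      have hkB : k ∈ B := by
        have : k = m⁻¹ * b := by rw [← hmk]; group
        rw [this]; exact mul_mem (B.inv_mem hm.1) hb
      have hkN : k ∈ N.toSubgroup := hle ⟨hk, hkB⟩
      rw [← hmk]
      exact mul_mem hm.2 hkN
    have hKBS : K ⊓ B ∈ S :=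
      ⟨hKc.inter hBc, hKBnormal, le_trans inf_le_right hBA, hKBnotN⟩
    have hBK : B ≤ K := le_trans (hBmin _ hKBS inf_le_right) inf_le_left
    have : B ⊓ N.toSubgroup ≤ (B ⊓ N.toSubgroup) ⊓ K :=
      le_inf le_rfl (le_trans inf_le_left hBK)
    rw [hinf] at this
    exact le_bot_iff.mp this
  -- B is finite
  have hBfin : Finite B := finite_of_inf_open_bot B N.toSubgroup N.isOpen hMbot
  -- the minimality property of B among closed normal subgroups
  have hminimal : ∀ C : Subgroup G, C ≤ B → IsClosed (C : Set G) → C.Normal →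
      C = ⊥ ∨ C = B := by
    intro C hCB hCc hCnorm
    rcases eq_or_ne C ⊥ with h | h
    · exact Or.inl h
    · refine Or.inr ?_
      have hCnotN : ¬ C ≤ N.toSubgroup := by
        intro hle
        apply h
        have : C ≤ B ⊓ N.toSubgroup := le_inf hCB hle
        rw [hMbot] at this
        exact le_bot_iff.mp this
      exact le_antisymm hCB (hBmin C ⟨hCc, hCnorm, le_trans hCB hBA, hCnotN⟩ hCB)
  -- B contains an element of prime order
  have hcard1 : Nat.card B ≠ 1 := by
    intro h
    exact hBne (Subgroup.eq_bot_of_card_eq B h)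
  obtain ⟨p, hp, hpdvd⟩ := Nat.exists_prime_and_dvd hcard1
  haveI : Fact p.Prime := ⟨hp⟩
  obtain ⟨b, hb⟩ := exists_prime_orderOf_dvd_card' (G := B) p hpdvd
  set g : G := (b : G) with hgdef
  have hgB : g ∈ B := b.2
  have hgord : orderOf g = p := by rw [hgdef, orderOf_submonoid, hb]
  have hg1 : g ≠ 1 := by
    intro h
    rw [h, orderOf_one] at hgord
    exact hp.one_lt.ne' hgord.symm
  -- the cyclic subgroup generated by g
  set Z : Subgroup G := Subgroup.zpowers g with hZ
  have hZB : Z ≤ B := (Subgroup.zpowers_le).mpr hgB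
  have hBsetfin : (B : Set G).Finite := Set.finite_coe_iff.mp hBfin
  have hZfin : (Z : Set G).Finite := hBsetfin.subset (SetLike.coe_subset_coe.mpr hZB)
  have hZc : IsClosed (Z : Set G) := hZfin.isClosed
  -- complement of Z
  obtain ⟨K', hK'c, hprod', hinf'⟩ := hC Z hZc
  have hdecomp' : ∀ w : G, ∃ z ∈ Z, ∃ k ∈ K', z * k = w := by
    intro w
    have : w ∈ (Z : Set G) * (K' : Set G) := by rw [hprod']; trivial
    obtain ⟨z, hz, k, hk, hzk⟩ := this
    exact ⟨z, hz, k, hk, hzk⟩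
  have hC2normal : (K' ⊓ B).Normal := by
    constructor
    intro n hn w
    obtain ⟨z, hz, k, hk, rfl⟩ := hdecomp' w
    have h1 : k * n * k⁻¹ ∈ K' ⊓ B :=
      ⟨mul_mem (mul_mem hk hn.1) (K'.inv_mem hk), hBnorm.conj_mem n hn.2 k⟩
    have hcomm : z * (k * n * k⁻¹) = (k * n * k⁻¹) * z :=
      hAab z (k * n * k⁻¹) (hBA (hZB hz)) (hBA h1.2)
    have heq : z * k * n * (z * k)⁻¹ = k * n * k⁻¹ := by
      rw [mul_inv_rev]
      calc z * k * n * (k⁻¹ * z⁻¹) = z * (k * n * k⁻¹) * z⁻¹ := by group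
        _ = (k * n * k⁻¹) * z * z⁻¹ := by rw [hcomm]
        _ = k * n * k⁻¹ := by group
    rw [heq]
    exact h1
  have hC2bot : K' ⊓ B = ⊥ := by
    rcases hminimal (K' ⊓ B) inf_le_right (hK'c.inter hBc) hC2normal with h | h
    · exact h
    · exfalso
      have hgK' : g ∈ K' ⊓ B := by rw [h]; exact hgB
      have : g ∈ Z ⊓ K' := ⟨Subgroup.mem_zpowers g, hgK'.1⟩
      rw [hinf', Subgroup.mem_bot] at this
      exact hg1 this
  have hBZ : B ≤ Z := by
    intro β hβ
    obtain ⟨z, hz, k, hk, hzk⟩ := hdecomp' β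
    have hkB : k ∈ B := by
      have : k = z⁻¹ * β := by rw [← hzk]; group
      rw [this]
      exact mul_mem (B.inv_mem (hZB hz)) hβ
    have : k ∈ K' ⊓ B := ⟨hk, hkB⟩
    rw [hC2bot, Subgroup.mem_bot] at this
    rw [← hzk, this, mul_one]
    exact hz
  have hBeqZ : B = Z := le_antisymm hBZ hZB
  exact ⟨B, hBA, hBne, hBc, hBnorm, hminimal, p, hp,
    by rw [hBeqZ, hZ]; exact (Nat.card_zpowers g).trans hgord⟩
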